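/- Let J ⊂ ℝ be a compact interval, c an endpoint of J, and f ∈ C^∞(J) pliable at c, with pliable series f = Σ_{k ≥ k₀} c_k g_k. Then for every integer r ≥ 0 one has f^{(r)}(c) = 0, and f^{(r)} = Σ_{k ≥ k₀} c_k g_k^{(r)} is pliable at c. -/

import Mathlib

open Set Filter Topology

noncomputable section

/-- The `C^r` norm `‖f‖_{C^r(J)} = ∑_{i=0}^{r} max_J |f^{(i)}|` of a function on a set
`J ⊆ ℝ` (derivatives taken within `J`). -/
def CrNorm (r : ℕ) (f : ℝ → ℝ) (J : Set ℝ) : ℝ :=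
  ∑ i ∈ Finset.range (r + 1), ⨆ x : J, |iteratedDerivWithin i f J (x : ℝ)|

/-- The support of `g` relative to the interval `[a,b]`: the closure of the set of points
of `[a,b]` where `g` is nonzero. -/
def suppOn (a b : ℝ) (g : ℝ → ℝ) : Set ℝ :=
  closure {x | x ∈ Set.Icc a b ∧ g x ≠ 0}

/-- The data `(k₀, cs, g)` is a series witnessing that `f` is pliable at the endpoint `c`
of the interval `[a,b]`:
* `f = Σ_{k ≥ k₀} cs k • g k` pointwise on `[a,b]`;
* the `cs k` are positive and super-exponentially converge to `0`;
* the `g k` are `C^∞` on `[a,b]`, their supports form a locally finite family of compact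
  subsets of `[a,b] ∖ {c}`, and for every `r` the `C^r` norms of `g k` grow at most
  exponentially in `k`;
* there is `L > 0` such that whenever `0 < 2ε < b - a`, the set `J_ε` of indices `k ≥ k₀`
  whose support meets `{x ∈ [a,b] : ε ≤ |x - c| ≤ 2ε}` has at most `L` elements, and
  `2^{-kL} ≤ ε` for every `k ∈ J_ε`. -/
structure IsPliableSeries (a b c : ℝ) (f : ℝ → ℝ) (k₀ : ℤ) (cs : ℤ → ℝ)
    (g : ℤ → ℝ → ℝ) : Prop where
  sum_eq : ∀ x ∈ Set.Icc a b,
    HasSum (fun k : {k : ℤ // k₀ ≤ k} => cs k.val * g k.val x) (f x)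
  cs_pos : ∀ k : ℤ, k₀ ≤ k → 0 < cs k
  cs_superexp : ∀ γ : ℝ,
    Tendsto (fun k : ℤ => (2 : ℝ) ^ (γ * (k : ℝ)) * cs k) atTop (𝓝 0)
  g_smooth : ∀ k : ℤ, k₀ ≤ k → ContDiffOn ℝ (⊤ : ℕ∞) (g k) (Set.Icc a b)
  supp_compact : ∀ k : ℤ, k₀ ≤ k → IsCompact (suppOn a b (g k))
  supp_subset : ∀ k : ℤ, k₀ ≤ k → suppOn a b (g k) ⊆ Set.Icc a b \ {c}
  supp_locFin : ∀ x ∈ Set.Icc a b \ {c}, ∃ U ∈ 𝓝 x,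
    {k : ℤ | k₀ ≤ k ∧ (suppOn a b (g k) ∩ U).Nonempty}.Finite
  norm_growth : ∀ r : ℕ, ∃ γ M : ℝ, ∀ k : ℤ, k₀ ≤ k →
    (2 : ℝ) ^ (γ * (k : ℝ)) * CrNorm r (g k) (Set.Icc a b) ≤ M
  index_bound : ∃ L : ℕ, 0 < L ∧ ∀ ε : ℝ, 0 < ε → 2 * ε < b - a →
    {k : ℤ | k₀ ≤ k ∧ (suppOn a b (g k) ∩
      {x ∈ Set.Icc a b | ε ≤ |x - c| ∧ |x - c| ≤ 2 * ε}).Nonempty}.Finite ∧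
    {k : ℤ | k₀ ≤ k ∧ (suppOn a b (g k) ∩
      {x ∈ Set.Icc a b | ε ≤ |x - c| ∧ |x - c| ≤ 2 * ε}).Nonempty}.ncard ≤ L ∧
    ∀ k : ℤ, k₀ ≤ k →
      (suppOn a b (g k) ∩ {x ∈ Set.Icc a b | ε ≤ |x - c| ∧ |x - c| ≤ 2 * ε}).Nonempty →
      (2 : ℝ) ^ (-(k : ℝ) * (L : ℝ)) ≤ ε

/-- `f` is pliable at the endpoint `c` of `[a,b]`. -/
def Pliable (a b c : ℝ) (f : ℝ → ℝ) : Prop :=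
  ∃ (k₀ : ℤ) (cs : ℤ → ℝ) (g : ℤ → ℝ → ℝ), IsPliableSeries a b c f k₀ cs g

/-! ### Auxiliary lemmas -/

section Aux

variable {a b : ℝ}

lemma hle_aux (i : ℕ) : (i : WithTop ℕ∞) ≤ ((⊤ : ℕ∞) : WithTop ℕ∞) := by
  exact_mod_cast le_top

lemma isClosed_suppOn (g : ℝ → ℝ) : IsClosed (suppOn a b g) := isClosed_closure

lemma vanish_off_supp {g : ℝ → ℝ} {x : ℝ} (hx : x ∈ Set.Icc a b)
    (hx' : x ∉ suppOn a b g) : g x = 0 := by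
  by_contra h
  exact hx' (subset_closure ⟨hx, h⟩)

lemma deriv_vanish_off_supp (hab : a < b) {g : ℝ → ℝ} {x : ℝ} (hx : x ∈ Set.Icc a b)
    (hx' : x ∉ suppOn a b g) (r : ℕ) :
    iteratedDerivWithin r g (Set.Icc a b) x = 0 := by
  have hV : (suppOn a b g)ᶜ ∈ 𝓝 x := (isClosed_suppOn g).isOpen_compl.mem_nhds hx'
  have hev : g =ᶠ[𝓝[Set.Icc a b] x] (fun _ => (0 : ℝ)) := by
    filter_upwards [nhdsWithin_le_nhds hV, self_mem_nhdsWithin] with y hyV hys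
    exact vanish_off_supp hys hyV
  have h0 : g x = (fun _ => (0 : ℝ)) x := vanish_off_supp hx hx'
  rw [iteratedDerivWithin_eq_iteratedFDerivWithin, hev.iteratedFDerivWithin_eq h0 r,
    iteratedFDerivWithin_zero_fun]
  simp

lemma supp_deriv_subset (hab : a < b) (g : ℝ → ℝ) (r : ℕ) :
    suppOn a b (iteratedDerivWithin r g (Set.Icc a b)) ⊆ suppOn a b g := by
  apply closure_minimal _ (isClosed_suppOn g)
  rintro x ⟨hx, hne⟩
  by_contra h
  exact hne (deriv_vanish_off_supp hab hx h r)

lemma contDiffOn_iteratedDerivWithin (hab : a < b) {g : ℝ → ℝ}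
    (hg : ContDiffOn ℝ (⊤ : ℕ∞) g (Set.Icc a b)) (r : ℕ) :
    ContDiffOn ℝ (⊤ : ℕ∞) (iteratedDerivWithin r g (Set.Icc a b)) (Set.Icc a b) := by
  induction r with
  | zero => simpa [iteratedDerivWithin_zero] using hg
  | succ n ih =>
    have hd : ContDiffOn ℝ (⊤ : ℕ∞)
        (derivWithin (iteratedDerivWithin n g (Set.Icc a b)) (Set.Icc a b)) (Set.Icc a b) := by
      refine ih.derivWithin (uniqueDiffOn_Icc hab) ?_
      exact_mod_cast le_top
    exact hd.congr fun x hx => congrFun iteratedDerivWithin_succ x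

lemma iteratedDerivWithin_comp_aux (hab : a < b) (g : ℝ → ℝ) (r i : ℕ) :
    ∀ x ∈ Set.Icc a b,
      iteratedDerivWithin i (iteratedDerivWithin r g (Set.Icc a b)) (Set.Icc a b) x
        = iteratedDerivWithin (i + r) g (Set.Icc a b) x := by
  induction i with
  | zero => intro x hx; simp
  | succ n ih =>
    intro x hx
    have hu := uniqueDiffOn_Icc hab
    rw [iteratedDerivWithin_succ, show n + 1 + r = n + r + 1 from by ring,
      iteratedDerivWithin_succ]
    exact derivWithin_congr (fun y hy => ih y hy) (ih x hx)

lemma iSup_abs_nonneg (g : ℝ → ℝ) (i : ℕ) :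
    (0 : ℝ) ≤ ⨆ x : Set.Icc a b, |iteratedDerivWithin i g (Set.Icc a b) (x : ℝ)| :=
  Real.iSup_nonneg fun _ => abs_nonneg _

lemma crNorm_nonneg (r : ℕ) (g : ℝ → ℝ) : (0 : ℝ) ≤ CrNorm r g (Set.Icc a b) :=
  Finset.sum_nonneg fun i _ => iSup_abs_nonneg g i

lemma abs_le_crNorm (hab : a < b) {g : ℝ → ℝ}
    (hg : ContDiffOn ℝ (⊤ : ℕ∞) g (Set.Icc a b)) {r i : ℕ} (hi : i ≤ r) {x : ℝ}
    (hx : x ∈ Set.Icc a b) :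
    |iteratedDerivWithin i g (Set.Icc a b) x| ≤ CrNorm r g (Set.Icc a b) := by
  have hs := uniqueDiffOn_Icc hab
  have hcont : ContinuousOn (fun y => |iteratedDerivWithin i g (Set.Icc a b) y|)
      (Set.Icc a b) := (hg.continuousOn_iteratedDerivWithin (hle_aux i) hs).abs
  have hb : BddAbove (Set.range fun y : Set.Icc a b =>
      |iteratedDerivWithin i g (Set.Icc a b) (y : ℝ)|) := by
    obtain ⟨B, hB⟩ := isCompact_Icc.bddAbove_image hcont
    refine ⟨B, ?_⟩
    rintro _ ⟨y, rfl⟩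
    exact hB (Set.mem_image_of_mem _ y.2)
  have h1 : |iteratedDerivWithin i g (Set.Icc a b) x|
      ≤ ⨆ y : Set.Icc a b, |iteratedDerivWithin i g (Set.Icc a b) (y : ℝ)| :=
    le_ciSup hb ⟨x, hx⟩
  refine h1.trans ?_
  exact Finset.single_le_sum (fun j _ => iSup_abs_nonneg g j)
    (Finset.mem_range.2 (by omega))

lemma crNorm_deriv_le (hab : a < b) (g : ℝ → ℝ) (r r' : ℕ) :
    CrNorm r' (iteratedDerivWithin r g (Set.Icc a b)) (Set.Icc a b)
      ≤ CrNorm (r' + r) g (Set.Icc a b) := by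
  classical
  unfold CrNorm
  have h1 : ∀ i : ℕ,
      (⨆ y : Set.Icc a b,
        |iteratedDerivWithin i (iteratedDerivWithin r g (Set.Icc a b)) (Set.Icc a b) (y : ℝ)|)
      = ⨆ y : Set.Icc a b, |iteratedDerivWithin (i + r) g (Set.Icc a b) (y : ℝ)| := by
    intro i
    congr 1
    funext y
    rw [iteratedDerivWithin_comp_aux hab g r i y y.2]
  calc (∑ i ∈ Finset.range (r' + 1), ⨆ y : Set.Icc a b,
        |iteratedDerivWithin i (iteratedDerivWithin r g (Set.Icc a b)) (Set.Icc a b) (y : ℝ)|)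
      = ∑ i ∈ Finset.range (r' + 1), ⨆ y : Set.Icc a b,
          |iteratedDerivWithin (i + r) g (Set.Icc a b) (y : ℝ)| := by
        exact Finset.sum_congr rfl fun i _ => h1 i
    _ = ∑ j ∈ (Finset.range (r' + 1)).image (· + r), ⨆ y : Set.Icc a b,
          |iteratedDerivWithin j g (Set.Icc a b) (y : ℝ)| := by
        rw [Finset.sum_image]
        intro x _ y _ h
        simp only at h; omega
    _ ≤ ∑ j ∈ Finset.range (r' + r + 1), ⨆ y : Set.Icc a b,
          |iteratedDerivWithin j g (Set.Icc a b) (y : ℝ)| := by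
        apply Finset.sum_le_sum_of_subset_of_nonneg
        · intro j hj
          simp only [Finset.mem_image, Finset.mem_range] at hj ⊢
          omega
        · intro j _ _
          exact iSup_abs_nonneg g j

lemma iteratedDerivWithin_zero_fun' (hab : a < b) (r : ℕ) {x : ℝ} (hx : x ∈ Set.Icc a b) :
    iteratedDerivWithin r (fun _ => (0 : ℝ)) (Set.Icc a b) x = 0 := by
  rw [iteratedDerivWithin_eq_iteratedFDerivWithin,
    iteratedFDerivWithin_zero_fun]
  simp

lemma iteratedDerivWithin_finsum (hab : a < b) {ι : Type*} (F : Finset ι) (h : ι → ℝ → ℝ)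
    (hh : ∀ k ∈ F, ContDiffOn ℝ (⊤ : ℕ∞) (h k) (Set.Icc a b)) (r : ℕ) {x : ℝ}
    (hx : x ∈ Set.Icc a b) :
    iteratedDerivWithin r (fun y => ∑ k ∈ F, h k y) (Set.Icc a b) x
      = ∑ k ∈ F, iteratedDerivWithin r (h k) (Set.Icc a b) x := by
  classical
  induction F using Finset.induction with
  | empty => simpa using iteratedDerivWithin_zero_fun' hab r hx
  | @insert k F hk ih =>
    have heq : (fun y => ∑ j ∈ insert k F, h j y)
        = (fun y => h k y) + (fun y => ∑ j ∈ F, h j y) := by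
      funext y
      simp [Finset.sum_insert hk]
    rw [heq, Finset.sum_insert hk,
      iteratedDerivWithin_add hx (uniqueDiffOn_Icc hab)
        ((hh k (Finset.mem_insert_self k F)).of_le (hle_aux r) x hx)
        ((ContDiffOn.sum fun j hj => hh j (Finset.mem_insert_of_mem hj)).of_le (hle_aux r) x hx),
      ih fun j hj => hh j (Finset.mem_insert_of_mem hj)]

end Aux



/-- Lemma 4.1(b) of the paper. If `f = Σ_{k ≥ k₀} cs k • g k` is pliable at
the endpoint `c` of `J = [a,b]`, then every derivative of `f` vanishes at `c` and
`f^{(r)} = Σ_{k ≥ k₀} cs k • g k^{(r)}` is again a pliable series at `c`. -/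
theorem stmt11 (a b c : ℝ) (hab : a < b) (hc : c = a ∨ c = b)
    (f : ℝ → ℝ) (hfsm : ContDiffOn ℝ (⊤ : ℕ∞) f (Set.Icc a b))
    (k₀ : ℤ) (cs : ℤ → ℝ) (g : ℤ → ℝ → ℝ)
    (hf : IsPliableSeries a b c f k₀ cs g) :
    ∀ r : ℕ,
      iteratedDerivWithin r f (Set.Icc a b) c = 0 ∧
      IsPliableSeries a b c (iteratedDerivWithin r f (Set.Icc a b)) k₀ cs
        (fun k => iteratedDerivWithin r (g k) (Set.Icc a b)) := by
  classical
  intro r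
  set s : Set ℝ := Set.Icc a b with hs_def
  have hs : UniqueDiffOn ℝ s := uniqueDiffOn_Icc hab
  set D : ℤ → ℝ → ℝ := fun k => iteratedDerivWithin r (g k) s with hD_def
  -- Step 1: local representation and HasSum for x ≠ c
  have step1 : ∀ x ∈ s, x ≠ c →
      HasSum (fun k : {k : ℤ // k₀ ≤ k} => cs k.val * D k.val x)
        (iteratedDerivWithin r f s x) := by
    intro x hx hxc
    obtain ⟨U, hU, hfin⟩ := hf.supp_locFin x ⟨hx, hxc⟩
    set T : Set {k : ℤ // k₀ ≤ k} := {k | (suppOn a b (g k.1) ∩ U).Nonempty} with hT_def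
    have hTfin : T.Finite := by
      have : T = Subtype.val ⁻¹' {k : ℤ | k₀ ≤ k ∧ (suppOn a b (g k) ∩ U).Nonempty} := by
        ext k
        simp [hT_def, k.2]
      rw [this]
      exact Set.Finite.preimage (Set.injOn_of_injective Subtype.val_injective) hfin
    set F : Finset {k : ℤ // k₀ ≤ k} := hTfin.toFinset with hF_def
    have hxU : x ∈ U := mem_of_mem_nhds hU
    -- f agrees with the finite sum on s ∩ U
    have hEq : ∀ y ∈ s, y ∈ U → f y = ∑ k ∈ F, cs k.1 * g k.1 y := by
      intro y hy hyU
      refine (hf.sum_eq y hy).unique (hasSum_sum_of_ne_finset_zero ?_)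
      intro k hk
      have hknot : ¬(suppOn a b (g k.1) ∩ U).Nonempty := by
        simpa [hF_def, Set.Finite.mem_toFinset, hT_def] using hk
      have : y ∉ suppOn a b (g k.1) := fun hy' => hknot ⟨y, hy', hyU⟩
      rw [vanish_off_supp hy this, mul_zero]
    -- derivative of f equals derivative of the finite sum
    have hDr : iteratedDerivWithin r f s x = ∑ k ∈ F, cs k.1 * D k.1 x := by
      have hev : f =ᶠ[𝓝[s] x] (fun y => ∑ k ∈ F, cs k.1 * g k.1 y) := by
        filter_upwards [nhdsWithin_le_nhds hU, self_mem_nhdsWithin] with y hyU hys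
        exact hEq y hys hyU
      have hx0 : f x = (fun y => ∑ k ∈ F, cs k.1 * g k.1 y) x := hEq x hx hxU
      have h1 : iteratedDerivWithin r f s x
          = iteratedDerivWithin r (fun y => ∑ k ∈ F, cs k.1 * g k.1 y) s x := by
        rw [iteratedDerivWithin_eq_iteratedFDerivWithin,
          hev.iteratedFDerivWithin_eq hx0 r,
          ← iteratedDerivWithin_eq_iteratedFDerivWithin]
      rw [h1, iteratedDerivWithin_finsum hab F (fun k y => cs k.1 * g k.1 y)
        (fun k _ => contDiffOn_const.mul (hf.g_smooth k.1 k.2)) r hx]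
      refine Finset.sum_congr rfl fun k _ => ?_
      exact iteratedDerivWithin_const_mul hx hs (cs k.1) ((hf.g_smooth k.1 k.2).of_le (hle_aux r) x hx)
    rw [hDr]
    apply hasSum_sum_of_ne_finset_zero
    intro k hk
    have hknot : ¬(suppOn a b (g k.1) ∩ U).Nonempty := by
      simpa [hF_def, Set.Finite.mem_toFinset, hT_def] using hk
    have hxnot : x ∉ suppOn a b (g k.1) := fun hx' => hknot ⟨x, hx', hxU⟩
    rw [show D k.1 x = 0 from deriv_vanish_off_supp hab hx hxnot r, mul_zero]
  -- c ∈ s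
  have hcs : c ∈ s := by
    rcases hc with rfl | rfl
    · exact Set.left_mem_Icc.2 hab.le
    · exact Set.right_mem_Icc.2 hab.le
  -- Step 2: limit of the derivative at c is 0
  have step2 : Tendsto (iteratedDerivWithin r f s) (𝓝[s \ {c}] c) (𝓝 0) := by
    rw [Metric.tendsto_nhdsWithin_nhds]
    intro η hη
    obtain ⟨L, hL, hLspec⟩ := hf.index_bound
    obtain ⟨γ, M, hM⟩ := hf.norm_growth r
    set η' : ℝ := η / ((L : ℝ) * (M + 1) + 1) with hη'_def
    have hM1 : (0 : ℝ) < M + 1 := by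
      have := hM k₀ le_rfl
      nlinarith [Real.rpow_pos_of_pos (by norm_num : (0:ℝ) < 2) (γ * (k₀ : ℝ)),
        crNorm_nonneg (a := a) (b := b) r (g k₀),
        mul_pos (Real.rpow_pos_of_pos (by norm_num : (0:ℝ) < 2) (γ * (k₀ : ℝ)))
          (lt_of_lt_of_le (by norm_num : (0:ℝ) < 1) (le_refl 1))]
    have hdenom : (0 : ℝ) < (L : ℝ) * (M + 1) + 1 := by positivity
    have hη' : 0 < η' := div_pos hη hdenom
    obtain ⟨K, hK⟩ := (Metric.tendsto_atTop).1 (hf.cs_superexp (-γ)) η' hη'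
    set δ : ℝ := min ((2 : ℝ) ^ (-(K : ℝ) * (L : ℝ))) ((b - a) / 2) with hδ_def
    have hδpos : 0 < δ := lt_min (Real.rpow_pos_of_pos (by norm_num) _) (by linarith)
    refine ⟨δ, hδpos, ?_⟩
    rintro x ⟨hx, hxc⟩ hdist
    have hxc' : x ≠ c := by simpa using hxc
    set ε : ℝ := |x - c| with hε_def
    have hεpos : 0 < ε := abs_pos.2 (sub_ne_zero.2 hxc')
    have hεδ : ε < δ := by rwa [Real.dist_eq] at hdist
    have hε2 : 2 * ε < b - a := by
      have : ε < (b - a) / 2 := lt_of_lt_of_le hεδ (min_le_right _ _)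
      linarith
    obtain ⟨hfinJ, _hcard, hkbig⟩ := hLspec ε hεpos hε2
    set A : Set ℝ := {y ∈ Set.Icc a b | ε ≤ |y - c| ∧ |y - c| ≤ 2 * ε} with hA_def
    have hxA : x ∈ A := ⟨hx, le_refl _, by linarith⟩
    set J : Set ℤ := {k : ℤ | k₀ ≤ k ∧ (suppOn a b (g k) ∩ A).Nonempty} with hJ_def
    set T' : Set {k : ℤ // k₀ ≤ k} := {k | (suppOn a b (g k.1) ∩ A).Nonempty} with hT'_def
    have hT'J : T' = Subtype.val ⁻¹' J := by
      ext k; simp [hT'_def, hJ_def, k.2]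
    have hT'fin : T'.Finite := by
      rw [hT'J]
      exact Set.Finite.preimage (Set.injOn_of_injective Subtype.val_injective) hfinJ
    set F' : Finset {k : ℤ // k₀ ≤ k} := hT'fin.toFinset with hF'_def
    -- the derivative at x is the sum over F'
    have hsum : iteratedDerivWithin r f s x = ∑ k ∈ F', cs k.1 * D k.1 x := by
      refine (step1 x hx hxc').unique (hasSum_sum_of_ne_finset_zero ?_)
      intro k hk
      have hknot : ¬(suppOn a b (g k.1) ∩ A).Nonempty := by
        simpa [hF'_def, Set.Finite.mem_toFinset, hT'_def] using hk
      by_contra hne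
      have hD0 : D k.1 x ≠ 0 := by
        intro h0; exact hne (by rw [h0, mul_zero])
      have hxsupp : x ∈ suppOn a b (g k.1) := by
        by_contra h'
        exact hD0 (deriv_vanish_off_supp hab hx h' r)
      exact hknot ⟨x, hxsupp, hxA⟩
    -- bound each term
    have hterm : ∀ k ∈ F', |cs k.1 * D k.1 x| ≤ (M + 1) * η' := by
      intro k hk
      have hkT' : (suppOn a b (g k.1) ∩ A).Nonempty := by
        simpa [hF'_def, Set.Finite.mem_toFinset, hT'_def] using hk
      have hεK : ε < (2 : ℝ) ^ (-(K : ℝ) * (L : ℝ)) :=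
        lt_of_lt_of_le hεδ (min_le_left _ _)
      have hkK : (2 : ℝ) ^ (-(k.1 : ℝ) * (L : ℝ)) < (2 : ℝ) ^ (-(K : ℝ) * (L : ℝ)) :=
        lt_of_le_of_lt (hkbig k.1 k.2 hkT') hεK
      have hkK' : -(k.1 : ℝ) * (L : ℝ) < -(K : ℝ) * (L : ℝ) :=
        (Real.rpow_lt_rpow_left_iff (by norm_num : (1:ℝ) < 2)).1 hkK
      have hLpos : (0 : ℝ) < (L : ℝ) := by exact_mod_cast hL
      have hKk : (K : ℝ) < (k.1 : ℝ) := by nlinarith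
      have hKk' : K ≤ k.1 := le_of_lt (by exact_mod_cast hKk)
      have hKbound := hK k.1 hKk'
      rw [Real.dist_eq, sub_zero] at hKbound
      have hcspos := hf.cs_pos k.1 k.2
      have h2pos : (0 : ℝ) < (2 : ℝ) ^ (-γ * (k.1 : ℝ)) :=
        Real.rpow_pos_of_pos (by norm_num) _
      have hscalar : (2 : ℝ) ^ (-γ * (k.1 : ℝ)) * cs k.1 < η' := by
        have : |(2 : ℝ) ^ (-γ * (k.1 : ℝ)) * cs k.1|
            = (2 : ℝ) ^ (-γ * (k.1 : ℝ)) * cs k.1 :=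
          abs_of_pos (mul_pos h2pos hcspos)
        linarith [hKbound, le_abs_self ((2 : ℝ) ^ (-γ * (k.1 : ℝ)) * cs k.1), this ▸ hKbound]
      -- CrNorm bound
      have hCr : CrNorm r (g k.1) s ≤ (2 : ℝ) ^ (-γ * (k.1 : ℝ)) * M := by
        have h1 := hM k.1 k.2
        have h2 : (2 : ℝ) ^ (-γ * (k.1 : ℝ)) * ((2 : ℝ) ^ (γ * (k.1 : ℝ)) * CrNorm r (g k.1) s)
            ≤ (2 : ℝ) ^ (-γ * (k.1 : ℝ)) * M :=
          mul_le_mul_of_nonneg_left h1 h2pos.le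
        have h3 : (2 : ℝ) ^ (-γ * (k.1 : ℝ)) * (2 : ℝ) ^ (γ * (k.1 : ℝ)) = 1 := by
          rw [← Real.rpow_add (by norm_num : (0:ℝ) < 2)]
          norm_num
        calc CrNorm r (g k.1) s
            = ((2 : ℝ) ^ (-γ * (k.1 : ℝ)) * (2 : ℝ) ^ (γ * (k.1 : ℝ))) * CrNorm r (g k.1) s := by
              rw [h3, one_mul]
          _ = (2 : ℝ) ^ (-γ * (k.1 : ℝ)) * ((2 : ℝ) ^ (γ * (k.1 : ℝ)) * CrNorm r (g k.1) s) := by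
              ring
          _ ≤ (2 : ℝ) ^ (-γ * (k.1 : ℝ)) * M := h2
      have hcn : (0:ℝ) ≤ CrNorm r (g k.1) (Set.Icc a b) := crNorm_nonneg r (g k.1)
      have hMnn : 0 ≤ M := by
        have := mul_pos h2pos hcspos
        simp only [hs_def] at hCr
        nlinarith
      have hDle : |D k.1 x| ≤ CrNorm r (g k.1) s :=
        abs_le_crNorm hab (hf.g_smooth k.1 k.2) (le_refl r) hx
      calc |cs k.1 * D k.1 x| = cs k.1 * |D k.1 x| := by
            rw [abs_mul, abs_of_pos hcspos]
        _ ≤ cs k.1 * ((2 : ℝ) ^ (-γ * (k.1 : ℝ)) * M) :=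
            mul_le_mul_of_nonneg_left (hDle.trans hCr) hcspos.le
        _ = ((2 : ℝ) ^ (-γ * (k.1 : ℝ)) * cs k.1) * M := by ring
        _ ≤ η' * M := mul_le_mul_of_nonneg_right hscalar.le hMnn
        _ ≤ (M + 1) * η' := by nlinarith
    -- sum the bounds
    have hcardF' : (F'.card : ℝ) ≤ (L : ℝ) := by
      have h1 : T'.ncard = F'.card := by
        rw [hF'_def, Set.ncard_eq_toFinset_card T' hT'fin]
      have h2 : T'.ncard ≤ J.ncard := by
        have himg : Subtype.val '' T' ⊆ J := by
          rw [hT'J]; exact Set.image_preimage_subset _ _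
        calc T'.ncard = (Subtype.val '' T').ncard :=
              (Set.ncard_image_of_injective T' Subtype.val_injective).symm
          _ ≤ J.ncard := Set.ncard_le_ncard himg hfinJ
      have h3 : F'.card ≤ L := le_trans (h1 ▸ h2) _hcard
      exact_mod_cast h3
    have hfinal : |iteratedDerivWithin r f s x| ≤ (L : ℝ) * ((M + 1) * η') := by
      rw [hsum]
      calc |∑ k ∈ F', cs k.1 * D k.1 x| ≤ ∑ k ∈ F', |cs k.1 * D k.1 x| :=
            Finset.abs_sum_le_sum_abs _ _
        _ ≤ ∑ _k ∈ F', (M + 1) * η' := Finset.sum_le_sum hterm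
        _ = (F'.card : ℝ) * ((M + 1) * η') := by
            rw [Finset.sum_const, nsmul_eq_mul]
        _ ≤ (L : ℝ) * ((M + 1) * η') := by
            apply mul_le_mul_of_nonneg_right hcardF'
            positivity
    rw [Real.dist_eq, sub_zero]
    calc |iteratedDerivWithin r f s x| ≤ (L : ℝ) * ((M + 1) * η') := hfinal
      _ < η := by
          have hLpos : (0 : ℝ) < (L : ℝ) := by exact_mod_cast hL
          rw [hη'_def, show (L : ℝ) * ((M + 1) * (η / ((L : ℝ) * (M + 1) + 1)))
            = ((L : ℝ) * (M + 1)) * η / ((L : ℝ) * (M + 1) + 1) from by ring,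
            div_lt_iff₀ hdenom]
          nlinarith [mul_pos (mul_pos hLpos hM1) hη]
    -- done with step2 inner
  -- Step 3: derivative vanishes at c
  have hNeBot : (𝓝[s \ {c}] c).NeBot := by
    rw [← mem_closure_iff_nhdsWithin_neBot]
    rcases hc with rfl | rfl
    · have h1 : Set.Ioc c b ⊆ s \ {c} := fun y hy => ⟨⟨hy.1.le, hy.2⟩, hy.1.ne'⟩
      have h2 : c ∈ closure (Set.Ioc c b) := by
        rw [closure_Ioc hab.ne]
        exact Set.left_mem_Icc.2 hab.le
      exact closure_mono h1 h2
    · have h1 : Set.Ico a c ⊆ s \ {c} := fun y hy => ⟨⟨hy.1, hy.2.le⟩, hy.2.ne⟩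
      have h2 : c ∈ closure (Set.Ico a c) := by
        rw [closure_Ico hab.ne]
        exact Set.right_mem_Icc.2 hab.le
      exact closure_mono h1 h2
  have hcont : ContinuousOn (iteratedDerivWithin r f s) s :=
    hfsm.continuousOn_iteratedDerivWithin (hle_aux r) hs
  have htend : Tendsto (iteratedDerivWithin r f s) (𝓝[s \ {c}] c)
      (𝓝 (iteratedDerivWithin r f s c)) :=
    (hcont.continuousWithinAt hcs).mono_left (nhdsWithin_mono c Set.diff_subset)
  have step3 : iteratedDerivWithin r f s c = 0 := tendsto_nhds_unique htend step2
  refine ⟨step3, ?_⟩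
  constructor
  · -- sum_eq
    intro x hx
    by_cases hxc : x = c
    · subst hxc
      have hall : (fun k : {k : ℤ // k₀ ≤ k} => cs k.val * D k.val x) = fun _ => 0 := by
        funext k
        have hnot : x ∉ suppOn a b (g k.1) := by
          intro hmem
          exact ((hf.supp_subset k.1 k.2) hmem).2 rfl
        rw [show D k.1 x = 0 from deriv_vanish_off_supp hab hx hnot r, mul_zero]
      rw [show iteratedDerivWithin r f s x = 0 from step3]
      rw [hall]
      exact hasSum_zero
    · exact step1 x hx hxc
  · exact hf.cs_pos
  · exact hf.cs_superexp
  · intro k hk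
    exact contDiffOn_iteratedDerivWithin hab (hf.g_smooth k hk) r
  · intro k hk
    exact (hf.supp_compact k hk).of_isClosed_subset (isClosed_suppOn _)
      (supp_deriv_subset hab (g k) r)
  · intro k hk
    exact (supp_deriv_subset hab (g k) r).trans (hf.supp_subset k hk)
  · intro x hx
    obtain ⟨U, hU, hfin⟩ := hf.supp_locFin x hx
    refine ⟨U, hU, hfin.subset ?_⟩
    rintro k ⟨hk1, y, hy1, hy2⟩
    exact ⟨hk1, y, supp_deriv_subset hab (g k) r hy1, hy2⟩
  · intro r'
    obtain ⟨γ, M, hM⟩ := hf.norm_growth (r' + r)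
    refine ⟨γ, M, fun k hk => ?_⟩
    calc (2 : ℝ) ^ (γ * (k : ℝ)) * CrNorm r' (D k) s
        ≤ (2 : ℝ) ^ (γ * (k : ℝ)) * CrNorm (r' + r) (g k) s :=
          mul_le_mul_of_nonneg_left (crNorm_deriv_le hab (g k) r r')
            (Real.rpow_pos_of_pos (by norm_num) _).le
      _ ≤ M := hM k hk
  · obtain ⟨L, hL, hLs⟩ := hf.index_bound
    refine ⟨L, hL, fun ε hε hε2 => ?_⟩
    obtain ⟨h1, h2, h3⟩ := hLs ε hε hε2
    have hsub : {k : ℤ | k₀ ≤ k ∧ (suppOn a b (D k) ∩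
        {x ∈ Set.Icc a b | ε ≤ |x - c| ∧ |x - c| ≤ 2 * ε}).Nonempty}
        ⊆ {k : ℤ | k₀ ≤ k ∧ (suppOn a b (g k) ∩
        {x ∈ Set.Icc a b | ε ≤ |x - c| ∧ |x - c| ≤ 2 * ε}).Nonempty} := by
      rintro k ⟨hk1, y, hy1, hy2⟩
      exact ⟨hk1, y, supp_deriv_subset hab (g k) r hy1, hy2⟩
    refine ⟨h1.subset hsub, le_trans (Set.ncard_le_ncard hsub h1) h2, fun k hk hne => ?_⟩
    refine h3 k hk (hne.mono ?_)
    exact Set.inter_subset_inter_left _ (supp_deriv_subset hab (g k) r)
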